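/- Upper-bound half of Lemma cap: let B_1,...,B_N satisfy B_i ≥ 8² and B_{i+1} ≥ B_i² for all i, set a_i = B_i^{−i/2} and n_i = B_i^{1+i}, and define c_k by the weight-maximization formula restricted to indices i ≤ M (all d_{i,j} = 0 for i > M). Then for B_M^{M+1} ≤ k ≤ B_{M+1}^{M+1} (with M < N) one has c_k ≤ C √(k B_M) for a constant C depending only on N. -/

import Mathlib

set_option maxHeartbeats 1000000

open Finset

/-- Upper-bound half of Lemma `cap`: with `B_i ≥ 8²`, `B_{i+1} ≥ B_i²`,
`a_i = B_i^{−i/2}`, `n_i = B_i^{1+i}`, and `c_k` defined by the weight-maximization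
formula restricted to indices `i ≤ M`, for `B_M^{M+1} ≤ k ≤ B_{M+1}^{M+1}` (`M < N`)
one has `c_k ≤ C √(k B_M)` for a constant `C` depending only on `N`. -/
theorem stmt19 (N : ℕ) (hN : 1 ≤ N) :
    ∃ C : ℝ, 0 < C ∧
      ∀ (M : ℕ) (B : ℕ → ℝ) (n : ℕ → ℕ) (k : ℕ) (c : ℝ),
        1 ≤ M → M < N →
        (∀ i, 1 ≤ i → i ≤ N → (64:ℝ) ≤ B i) →
        (∀ i, 1 ≤ i → i < N → (B i)^2 ≤ B (i+1)) →
        (∀ i, 1 ≤ i → i ≤ N → (n i : ℝ) = (B i)^(1+i)) →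
        ((B M)^(M+1) ≤ (k:ℝ)) → ((k:ℝ) ≤ (B (M+1))^(M+1)) →
        IsGreatest
          {v : ℝ | ∃ d : ℕ → ℕ → ℕ,
            (∑ i ∈ Finset.Icc 1 M, ∑ j ∈ Finset.range (n i),
              ((d i j : ℝ)^2 + (d i j : ℝ))) ≤ 2*(k:ℝ) ∧
            v = ∑ i ∈ Finset.Icc 1 M, ∑ j ∈ Finset.range (n i),
              (d i j : ℝ) * (B i) ^ (-(i:ℝ)/2)} c →
        c ≤ C * Real.sqrt ((k:ℝ) * B M) := by
  have hN' : (0:ℝ) < N := by exact_mod_cast hN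
  refine ⟨2*N, by linarith, ?_⟩
  intro M B n k c hM hMN hB64 hBsq hn hk1 hk2 hgreat
  obtain ⟨d, hd, hc⟩ := hgreat.1
  have hMN' : M ≤ N := hMN.le
  have hBM : (64:ℝ) ≤ B M := hB64 M hM hMN'
  have hBMpos : (0:ℝ) < B M := by linarith
  have hkpos : (0:ℝ) < (k:ℝ) := lt_of_lt_of_le (by positivity) hk1
  set sB := Real.sqrt (B M) with hsB
  set sk := Real.sqrt (k:ℝ) with hsk
  have hsBpos : 0 < sB := Real.sqrt_pos.2 hBMpos
  have hskpos : 0 < sk := Real.sqrt_pos.2 hkpos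
  have hsB2 : sB^2 = B M := Real.sq_sqrt hBMpos.le
  have hsk2 : sk^2 = (k:ℝ) := Real.sq_sqrt hkpos.le
  set l := sB / sk with hl
  have hlpos : 0 < l := by positivity
  -- monotonicity of B
  have hmono : ∀ i j, 1 ≤ i → i ≤ j → j ≤ N → B i ≤ B j := by
    intro i j h1 hij hjN
    induction j with
    | zero => omega
    | succ m ih =>
      rcases Nat.lt_or_ge i (m+1) with h | h
      · have him : i ≤ m := by omega
        have hm1 : 1 ≤ m := by omega
        have h64 := hB64 m hm1 (by omega)
        have hs := hBsq m hm1 (by omega)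
        have : B m ≤ B (m+1) := by nlinarith
        exact le_trans (ih him (by omega)) this
      · have : i = m+1 := by omega
        subst this; exact le_rfl
  -- inner sum of a_i^2 equals B i
  have inner : ∀ i ∈ Icc 1 M,
      (∑ _j ∈ range (n i), ((B i) ^ (-(i:ℝ)/2))^2) = B i := by
    intro i hi
    obtain ⟨hi1, hiM⟩ := mem_Icc.mp hi
    have hiN : i ≤ N := le_trans hiM hMN'
    have hx : (0:ℝ) < B i := lt_of_lt_of_le (by norm_num) (hB64 i hi1 hiN)
    have ha2 : ((B i) ^ (-(i:ℝ)/2))^2 = (B i) ^ (-(i:ℝ)) := by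
      rw [← Real.rpow_natCast ((B i) ^ (-(i:ℝ)/2)) 2, ← Real.rpow_mul hx.le]
      norm_num
    rw [Finset.sum_const, Finset.card_range, ha2, nsmul_eq_mul, hn i hi1 hiN,
      ← Real.rpow_natCast (B i) (1+i), ← Real.rpow_add hx]
    push_cast
    norm_num
  -- pointwise AM-GM bound
  have pt : ∀ i ∈ Icc 1 M, ∀ j ∈ range (n i),
      (d i j : ℝ) * (B i) ^ (-(i:ℝ)/2) ≤
        (l/2)*((d i j : ℝ)^2 + (d i j : ℝ)) + (1/(2*l)) * ((B i) ^ (-(i:ℝ)/2))^2 := by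
    intro i hi j hj
    set x : ℝ := (d i j : ℝ) with hx
    set a : ℝ := (B i) ^ (-(i:ℝ)/2) with ha
    have hx0 : (0:ℝ) ≤ x := Nat.cast_nonneg _
    have h2 : 2*l*(x*a) ≤ l^2*(x^2+x) + a^2 := by
      nlinarith [sq_nonneg (l*x - a), mul_pos hlpos hlpos, mul_nonneg (mul_pos hlpos hlpos).le hx0]
    have heq : (l/2)*(x^2+x) + (1/(2*l)) * a^2 = (l^2*(x^2+x) + a^2)/(2*l) := by
      field_simp
    rw [heq, le_div_iff₀ (by positivity)]
    linarith
  -- main bound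
  have key : c ≤ (l/2) * (2*(k:ℝ)) + (1/(2*l)) * ((N:ℝ) * B M) := by
    have h1 : c ≤ ∑ i ∈ Icc 1 M, ∑ j ∈ range (n i),
        ((l/2)*((d i j : ℝ)^2 + (d i j : ℝ)) + (1/(2*l)) * ((B i) ^ (-(i:ℝ)/2))^2) := by
      rw [hc]
      exact Finset.sum_le_sum (fun i hi => Finset.sum_le_sum (pt i hi))
    have h2 : ∑ i ∈ Icc 1 M, ∑ j ∈ range (n i),
        ((l/2)*((d i j : ℝ)^2 + (d i j : ℝ)) + (1/(2*l)) * ((B i) ^ (-(i:ℝ)/2))^2)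
        = (l/2) * (∑ i ∈ Icc 1 M, ∑ j ∈ range (n i), ((d i j : ℝ)^2 + (d i j : ℝ)))
          + (1/(2*l)) * (∑ i ∈ Icc 1 M, ∑ j ∈ range (n i), ((B i) ^ (-(i:ℝ)/2))^2) := by
      simp only [Finset.sum_add_distrib, Finset.mul_sum, mul_add]
    have h3 : (∑ i ∈ Icc 1 M, ∑ j ∈ range (n i), ((B i) ^ (-(i:ℝ)/2))^2) ≤ (N:ℝ) * B M := by
      rw [Finset.sum_congr rfl inner]
      calc ∑ i ∈ Icc 1 M, B i ≤ ∑ _i ∈ Icc 1 M, B M :=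
            Finset.sum_le_sum (fun i hi => by
              obtain ⟨hi1, hiM⟩ := mem_Icc.mp hi
              exact hmono i M hi1 hiM hMN')
        _ = (M:ℝ) * B M := by
            rw [Finset.sum_const, Nat.card_Icc, nsmul_eq_mul]; norm_num
        _ ≤ (N:ℝ) * B M := by
            have : (M:ℝ) ≤ N := by exact_mod_cast hMN'
            nlinarith
    calc c ≤ _ := h1
      _ = _ := h2
      _ ≤ (l/2) * (2*(k:ℝ)) + (1/(2*l)) * ((N:ℝ) * B M) := by
          have t1 : (l/2) * (∑ i ∈ Icc 1 M, ∑ j ∈ range (n i), ((d i j : ℝ)^2 + (d i j : ℝ)))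
              ≤ (l/2) * (2*(k:ℝ)) := mul_le_mul_of_nonneg_left hd (by positivity)
          have t2 : (1/(2*l)) * (∑ i ∈ Icc 1 M, ∑ j ∈ range (n i), ((B i) ^ (-(i:ℝ)/2))^2)
              ≤ (1/(2*l)) * ((N:ℝ) * B M) := mul_le_mul_of_nonneg_left h3 (by positivity)
          linarith
  -- final arithmetic
  have hsqrtmul : Real.sqrt ((k:ℝ) * B M) = sk * sB := by
    rw [Real.sqrt_mul (Nat.cast_nonneg k), hsk, hsB]
  rw [hsqrtmul]
  have e1 : (l/2) * (2*(k:ℝ)) = sB * sk := by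
    rw [hl]; field_simp; linear_combination (-1:ℝ) * hsk2
  have e2 : (1/(2*l)) * ((N:ℝ) * B M) = ((N:ℝ)/2) * (sB * sk) := by
    rw [hl]; field_simp; linear_combination (-1:ℝ) * hsB2
  have hN1 : (1:ℝ) ≤ (N:ℝ) := by exact_mod_cast hN
  have hfin : (1 + (N:ℝ)/2) ≤ 2*(N:ℝ) := by linarith
  have hpos : 0 < sB * sk := mul_pos hsBpos hskpos
  calc c ≤ (l/2) * (2*(k:ℝ)) + (1/(2*l)) * ((N:ℝ) * B M) := key
    _ = (1 + (N:ℝ)/2) * (sB * sk) := by rw [e1, e2]; ring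
    _ ≤ 2*(N:ℝ) * (sB * sk) := mul_le_mul_of_nonneg_right hfin hpos.le
    _ = 2*(N:ℝ) * (sk * sB) := by ring
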